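/- Let n > 1 and let h₁, …, hₙ be elements of a real inner product space (e.g. a Hilbert space) such that no h_i is zero and no pair h_i, h_j with i ≠ j is collinear (i.e. no h_i is a scalar multiple of h_j). Then the (n−1)-fold tensor powers h₁^{⊗(n−1)}, …, hₙ^{⊗(n−1)}, regarded as elements of the (n−1)-fold tensor power of the space over ℝ, are linearly independent. -/

import Mathlib

open scoped TensorProduct RealInnerProductSpace

/-- **Linear independence of tensor powers.** If `h₁, …, hₙ` (`n > 1`) are nonzero,
pairwise non-collinear vectors of a real inner product space, then the `(n-1)`-fold
tensor powers `hᵢ^{⊗(n-1)}` are linearly independent in the `(n-1)`-fold tensor power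
of the space over `ℝ`. -/
theorem tensor_powers_linearIndependent
    {H : Type*} [NormedAddCommGroup H] [InnerProductSpace ℝ H]
    (n : ℕ) (hn : 1 < n) (h : Fin n → H) (h0 : ∀ i, h i ≠ 0)
    (hcol : ∀ i j, i ≠ j → ∀ c : ℝ, h i ≠ c • h j) :
    LinearIndependent ℝ
      (fun i : Fin n => PiTensorProduct.tprod ℝ (fun _ : Fin (n - 1) => h i)) := by
  obtain ⟨m, rfl⟩ : ∃ m, n = m + 1 := ⟨n - 1, by omega⟩
  rw [Fintype.linearIndependent_iff]
  intro g hg j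
  -- strict Cauchy-Schwarz for each i ≠ j
  have key : ∀ i : Fin (m + 1), i ≠ j → ⟪h j, h i⟫ ^ 2 < ‖h j‖ ^ 2 * ‖h i‖ ^ 2 := by
    intro i hij
    have h1 : |⟪h j, h i⟫ / (‖h j‖ * ‖h i‖)| ≤ 1 := abs_real_inner_div_norm_mul_norm_le_one _ _
    have h2 : |⟪h j, h i⟫ / (‖h j‖ * ‖h i‖)| ≠ 1 := by
      intro h2eq
      rw [abs_real_inner_div_norm_mul_norm_eq_one_iff] at h2eq
      obtain ⟨-, r, -, hr⟩ := h2eq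
      exact hcol i j hij r hr
    have hpos : 0 < ‖h j‖ * ‖h i‖ := by
      have := norm_pos_iff.2 (h0 j); have := norm_pos_iff.2 (h0 i); positivity
    have h3 : |⟪h j, h i⟫| < ‖h j‖ * ‖h i‖ := by
      rw [abs_div, abs_of_pos hpos] at h1 h2
      have := lt_of_le_of_ne h1 h2
      calc |⟪h j, h i⟫| = |⟪h j, h i⟫| / (‖h j‖ * ‖h i‖) * (‖h j‖ * ‖h i‖) := by
            rw [div_mul_cancel₀ _ hpos.ne']
        _ < 1 * (‖h j‖ * ‖h i‖) := by exact mul_lt_mul_of_pos_right this hpos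
        _ = ‖h j‖ * ‖h i‖ := one_mul _
    calc ⟪h j, h i⟫ ^ 2 = |⟪h j, h i⟫| ^ 2 := (sq_abs _).symm
      _ < (‖h j‖ * ‖h i‖) ^ 2 := by
          exact pow_lt_pow_left₀ h3 (abs_nonneg _) (by norm_num)
      _ = ‖h j‖ ^ 2 * ‖h i‖ ^ 2 := by ring
  -- the vectors w i: component of h j orthogonal to h i (scaled)
  set w : Fin (m + 1) → H := fun i => ‖h i‖ ^ 2 • h j - ⟪h j, h i⟫ • h i with hw
  have hw_orth : ∀ i, ⟪w i, h i⟫ = 0 := by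
    intro i
    simp only [hw, inner_sub_left, real_inner_smul_left]
    rw [real_inner_self_eq_norm_sq]
    ring
  have hw_pos : ∀ i, i ≠ j → 0 < ⟪w i, h j⟫ := by
    intro i hij
    have := key i hij
    simp only [hw, inner_sub_left, real_inner_smul_left]
    rw [real_inner_self_eq_norm_sq, real_inner_comm (h i) (h j)]
    have hc : ⟪h i, h j⟫ * ⟪h i, h j⟫ = ⟪h j, h i⟫ ^ 2 := by
      rw [real_inner_comm (h i) (h j)]; ring
    nlinarith [key i hij, hc]
  -- build the functional
  let φ : Fin m → (H →ₗ[ℝ] ℝ) := fun s => innerₛₗ ℝ (w (j.succAbove s))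
  let F : (⨂[ℝ] _ : Fin m, H) →ₗ[ℝ] ℝ :=
    PiTensorProduct.lift ((MultilinearMap.mkPiAlgebra ℝ (Fin m) ℝ).compLinearMap φ)
  have hF : ∀ i, F (PiTensorProduct.tprod ℝ (fun _ : Fin m => h i))
      = ∏ s : Fin m, ⟪w (j.succAbove s), h i⟫ := by
    intro i
    simp [F, φ, PiTensorProduct.lift.tprod, MultilinearMap.compLinearMap_apply,
      MultilinearMap.mkPiAlgebra_apply]
  have hsum : ∑ i, g i * ∏ s : Fin m, ⟪w (j.succAbove s), h i⟫ = 0 := by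
    have := congrArg F hg
    simpa [map_sum, map_smul, hF, smul_eq_mul] using this
  have hzero : ∀ i, i ≠ j → ∏ s : Fin m, ⟪w (j.succAbove s), h i⟫ = 0 := by
    intro i hij
    obtain ⟨s, hs⟩ := Fin.exists_succAbove_eq hij
    exact Finset.prod_eq_zero (Finset.mem_univ s) (by rw [hs]; exact hw_orth i)
  have hprod_pos : 0 < ∏ s : Fin m, ⟪w (j.succAbove s), h j⟫ :=
    Finset.prod_pos fun s _ => hw_pos _ (Fin.succAbove_ne j s)
  rw [Finset.sum_eq_single j (fun i _ hij => by rw [hzero i hij, mul_zero])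
    (fun hj => absurd (Finset.mem_univ j) hj)] at hsum
  exact (mul_eq_zero.1 hsum).resolve_right (ne_of_gt hprod_pos)
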